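/- In ℝ^r with the standard inner product, let Δ = B_r = {±e_i : 1 ≤ i ≤ r} ∪ {±e_i ± e_j : 1 ≤ i < j ≤ r} (r ≥ 2), with fundamental system Π = {α_i = e_i − e_{i+1} : 1 ≤ i ≤ r−1} ∪ {α_r = e_r}, and let α^l ∈ ℝ^r be determined by ⟨α^l, α_j⟩ = δ_{lj}. Then for every 1 ≤ l ≤ r, with Y = (π/2)α^l, Σ_Y = {±e_i ± e_j : 1 ≤ i < j ≤ l} ∪ {±e_i : l < i ≤ r} ∪ {±e_i ± e_j : l < i < j ≤ r}; that is, Σ_Y is the root system D_l (the long roots on the first l coordinates) joined with B_{r−l} (on the last r−l coordinates). -/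
import Mathlib


open RealInnerProductSpace

/-- **Computation of `Σ_Y` for `Δ = B_r` (`r = m + 1 ≥ 2`) and `Y = (π/2) αˡ`.**
With the standard basis `e` of `ℝ^r`, `Δ = {±e_i} ∪ {±e_i ± e_j : i < j}`, simple roots
`α_i = e_i − e_{i+1}` (for `i < r − 1`) and `α_{r−1} = e_{r−1}` (0-based), and `d = αˡ`
the dual vector of the simple root with 0-based index `l`, we have
`Σ_Y = {±e_i ± e_j : i < j ≤ l} ∪ {±e_i : l < i} ∪ {±e_i ± e_j : l < i < j}`,
i.e. the root system `D_{l+1}` (long roots on the first `l+1` coordinates) joined with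
`B_{r−l−1}` on the remaining coordinates. -/
theorem stmt_8 (m : ℕ) (hm : 1 ≤ m)
    (e : Fin (m + 1) → EuclideanSpace ℝ (Fin (m + 1)))
    (he : ∀ i, e i = EuclideanSpace.single i (1 : ℝ))
    (Δ : Set (EuclideanSpace ℝ (Fin (m + 1))))
    (hΔ : Δ = {v | ∃ (s : ℝ) (i : Fin (m + 1)), (s = 1 ∨ s = -1) ∧ v = s • e i} ∪
      {v | ∃ (s t : ℝ) (i j : Fin (m + 1)), (s = 1 ∨ s = -1) ∧ (t = 1 ∨ t = -1) ∧
        i < j ∧ v = s • e i + t • e j})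
    (α : Fin (m + 1) → EuclideanSpace ℝ (Fin (m + 1)))
    (hα : ∀ i : Fin m, α i.castSucc = e i.castSucc - e i.succ)
    (hαlast : α (Fin.last m) = e (Fin.last m))
    (l : Fin (m + 1))
    (d : EuclideanSpace ℝ (Fin (m + 1)))
    (hd : ∀ j, ⟪d, α j⟫ = if j = l then 1 else 0)
    (Y : EuclideanSpace ℝ (Fin (m + 1))) (hY : Y = (Real.pi / 2) • d) :
    {lam | lam ∈ Δ ∧ ∃ k : ℤ, ⟪lam, Y⟫ = (k : ℝ) * Real.pi} =
      {v | ∃ (s t : ℝ) (i j : Fin (m + 1)), (s = 1 ∨ s = -1) ∧ (t = 1 ∨ t = -1) ∧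
        i < j ∧ (j : ℕ) ≤ (l : ℕ) ∧ v = s • e i + t • e j} ∪
      {v | ∃ (s : ℝ) (i : Fin (m + 1)), (s = 1 ∨ s = -1) ∧ (l : ℕ) < (i : ℕ) ∧
        v = s • e i} ∪
      {v | ∃ (s t : ℝ) (i j : Fin (m + 1)), (s = 1 ∨ s = -1) ∧ (t = 1 ∨ t = -1) ∧
        (l : ℕ) < (i : ℕ) ∧ i < j ∧ v = s • e i + t • e j} := by
  have hpi := Real.pi_ne_zero
  have hde : ∀ i, ⟪d, e i⟫ = d i := by
    intro i; rw [he]; simp [EuclideanSpace.inner_single_right]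
  have hdval : ∀ i : Fin (m+1), d i = if (i:ℕ) ≤ (l:ℕ) then 1 else 0 := by
    intro i
    induction i using Fin.reverseInduction with
    | last =>
      have h := hd (Fin.last m)
      rw [hαlast, hde] at h
      rw [h]
      have hlt := l.isLt
      by_cases hc : Fin.last m = l
      · rw [if_pos hc, if_pos (by rw [← hc])]
      · rw [if_neg hc, if_neg]
        intro hle
        exact hc (Fin.ext (by simp only [Fin.val_last] at *; omega))
    | cast i ih =>
      have h := hd i.castSucc
      rw [hα, inner_sub_right, hde, hde] at h
      have hiff : i.castSucc = l ↔ ((i.castSucc : Fin (m+1)) : ℕ) = (l:ℕ) := Fin.ext_iff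
      have h2 : d i.castSucc =
          (if ((i.succ : Fin (m+1)):ℕ) ≤ (l:ℕ) then (1:ℝ) else 0) +
            (if i.castSucc = l then 1 else 0) := by
        rw [← ih]; linarith
      rw [h2]
      simp only [hiff, Fin.coe_castSucc, Fin.val_succ]
      split_ifs <;> first | (exfalso; omega) | norm_num
  have hed : ∀ i, ⟪e i, d⟫ = d i := by
    intro i; rw [he]; simp [EuclideanSpace.inner_single_left]
  have hiY : ∀ lam, ⟪lam, Y⟫ = Real.pi/2 * ⟪lam, d⟫ := by
    intro lam; rw [hY, real_inner_smul_right]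
  have h1 : ∀ (s:ℝ) (i), ⟪s • e i, d⟫ = s * d i := by
    intro s i; rw [real_inner_smul_left, hed]
  have h2 : ∀ (s t:ℝ) (i j), ⟪s • e i + t • e j, d⟫ = s * d i + t * d j := by
    intro s t i j; rw [inner_add_left, h1, h1]
  have hcrit : ∀ c : ℝ, (∃ k : ℤ, Real.pi/2 * c = (k:ℝ) * Real.pi) ↔ (∃ k : ℤ, c = 2*(k:ℝ)) := by
    intro c
    constructor
    · rintro ⟨k, hk⟩
      refine ⟨k, mul_left_cancel₀ hpi ?_⟩
      ring_nf at hk ⊢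
      linarith
    · rintro ⟨k, hk⟩; exact ⟨k, by rw [hk]; ring⟩
  have hodd : ∀ (s:ℝ), (s = 1 ∨ s = -1) → ¬ ∃ k:ℤ, s = 2*(k:ℝ) := by
    rintro s hs ⟨k, hk⟩
    rcases hs with rfl | rfl
    · have : (1:ℤ) = 2*k := by exact_mod_cast hk
      omega
    · have : (-1:ℤ) = 2*k := by exact_mod_cast hk
      omega
  rw [hΔ]
  ext lam
  simp only [Set.mem_setOf_eq, Set.mem_union]
  constructor
  · rintro ⟨hmem, k, hk⟩
    rcases hmem with ⟨s, i, hs, rfl⟩ | ⟨s, t, i, j, hs, ht, hij, rfl⟩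
    · rw [hiY, h1, hdval] at hk
      by_cases hc : (i:ℕ) ≤ (l:ℕ)
      · exfalso
        rw [if_pos hc, mul_one] at hk
        exact hodd s hs ((hcrit s).mp ⟨k, hk⟩)
      · exact Or.inl (Or.inr ⟨s, i, hs, not_le.mp hc, rfl⟩)
    · rw [hiY, h2, hdval, hdval] at hk
      by_cases hcj : (j:ℕ) ≤ (l:ℕ)
      · exact Or.inl (Or.inl ⟨s, t, i, j, hs, ht, hij, hcj, rfl⟩)
      · by_cases hci : (i:ℕ) ≤ (l:ℕ)
        · exfalso
          rw [if_pos hci, if_neg hcj] at hk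
          obtain ⟨k', hk'⟩ := (hcrit _).mp ⟨k, hk⟩
          exact hodd s hs ⟨k', by linarith⟩
        · exact Or.inr ⟨s, t, i, j, hs, ht, not_le.mp hci, hij, rfl⟩
  · have hnat : ∀ i j : Fin (m+1), i < j → (i:ℕ) < (j:ℕ) := fun i j h => h
    rintro ((⟨s, t, i, j, hs, ht, hij, hjl, rfl⟩ | ⟨s, i, hs, hli, rfl⟩) |
      ⟨s, t, i, j, hs, ht, hli, hij, rfl⟩)
    · refine ⟨Or.inr ⟨s, t, i, j, hs, ht, hij, rfl⟩, ?_⟩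
      have hil : (i:ℕ) ≤ (l:ℕ) := le_trans (le_of_lt (hnat i j hij)) hjl
      rw [hiY, h2, hdval, hdval, if_pos hil, if_pos hjl]
      rcases hs with rfl | rfl <;> rcases ht with rfl | rfl
      · exact ⟨1, by push_cast; ring⟩
      · exact ⟨0, by push_cast; ring⟩
      · exact ⟨0, by push_cast; ring⟩
      · exact ⟨-1, by push_cast; ring⟩
    · refine ⟨Or.inl ⟨s, i, hs, rfl⟩, 0, ?_⟩
      rw [hiY, h1, hdval, if_neg (not_le.mpr hli)]
      push_cast; ring
    · refine ⟨Or.inr ⟨s, t, i, j, hs, ht, hij, rfl⟩, 0, ?_⟩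
      have hlj : (l:ℕ) < (j:ℕ) := lt_trans hli (hnat i j hij)
      rw [hiY, h2, hdval, hdval, if_neg (not_le.mpr hli), if_neg (not_le.mpr hlj)]
      push_cast; ring
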